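/- Let L : R^m → R be differentiable with H-Lipschitz gradient (H > 0), and let θ' = θ - α d for a step size 0 < α ≤ 1/H and d ∈ R^m satisfying ‖d - ∇L(θ)‖ ≤ c‖∇L(θ)‖ with 0 ≤ c < 1. Then L(θ') - L(θ) ≤ -(α/2)(1 - c²)‖∇L(θ)‖². -/

import Mathlib

open scoped RealInnerProductSpace

/-- Per-step descent guarantee of CAGrad. -/
theorem stmt_3 (m : ℕ) (H α c : ℝ) (hH : 0 < H) (hα : 0 < α) (hαH : α ≤ 1 / H)
    (hc0 : 0 ≤ c) (hc1 : c < 1)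
    (L : EuclideanSpace ℝ (Fin m) → ℝ) (g : EuclideanSpace ℝ (Fin m) → EuclideanSpace ℝ (Fin m))
    (hgrad : ∀ x, HasGradientAt L (g x) x)
    (hLip : ∀ x y, ‖g x - g y‖ ≤ H * ‖x - y‖)
    (θ d : EuclideanSpace ℝ (Fin m)) (hd : ‖d - g θ‖ ≤ c * ‖g θ‖) :
    L (θ - α • d) - L θ ≤ -(α / 2) * (1 - c ^ 2) * ‖g θ‖ ^ 2 := by
  set v : EuclideanSpace ℝ (Fin m) := -(α • d) with hv
  have hgcont : Continuous g := by
    rw [Metric.continuous_iff]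
    intro x ε hε
    refine ⟨ε / H, by positivity, fun y hy => ?_⟩
    rw [dist_eq_norm]
    calc ‖g y - g x‖ ≤ H * ‖y - x‖ := hLip y x
      _ < H * (ε / H) := by
          exact mul_lt_mul_of_pos_left (by rwa [dist_eq_norm] at hy) hH
      _ = ε := by field_simp
  -- φ t = L (θ + t • v)
  have hderiv : ∀ t : ℝ, HasDerivAt (fun t : ℝ => L (θ + t • v))
      (⟪g (θ + t • v), v⟫) t := by
    intro t
    have h1 : HasDerivAt (fun t : ℝ => θ + t • v) v t := by
      simpa using ((hasDerivAt_id t).smul_const v).const_add θ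
    have h2 := (hgrad (θ + t • v)).hasFDerivAt
    have := h2.comp_hasDerivAt t h1
    simpa [InnerProductSpace.toDual_apply_apply, Function.comp_def] using this
  have hφ'cont : Continuous fun t : ℝ => ⟪g (θ + t • v), v⟫ := by
    exact (Continuous.inner (hgcont.comp (continuous_const.add (continuous_id.smul continuous_const))) continuous_const)
  have hFTC : L (θ + v) - L θ =
      ∫ t in (0:ℝ)..1, ⟪g (θ + t • v), v⟫ := by
    have := intervalIntegral.integral_eq_sub_of_hasDerivAt
      (f := fun t : ℝ => L (θ + t • v)) (f' := fun t : ℝ => ⟪g (θ + t • v), v⟫)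
      (a := 0) (b := 1) (fun t _ => hderiv t)
      (hφ'cont.intervalIntegrable 0 1)
    simpa using this.symm
  have hbound : ∀ t ∈ Set.Icc (0:ℝ) 1,
      ⟪g (θ + t • v), v⟫ ≤ ⟪g θ, v⟫ + H * t * ‖v‖ ^ 2 := by
    intro t ht
    have h1 : ⟪g (θ + t • v), v⟫ = ⟪g θ, v⟫ + ⟪g (θ + t • v) - g θ, v⟫ := by
      rw [inner_sub_left]; ring
    rw [h1]
    gcongr
    calc ⟪g (θ + t • v) - g θ, v⟫ ≤ ‖g (θ + t • v) - g θ‖ * ‖v‖ :=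
          real_inner_le_norm _ _
      _ ≤ (H * ‖(θ + t • v) - θ‖) * ‖v‖ := by
          gcongr; exact hLip _ _
      _ = H * t * ‖v‖ ^ 2 := by
          rw [add_sub_cancel_left, norm_smul, Real.norm_eq_abs, abs_of_nonneg ht.1]
          ring
  have hint : (∫ t in (0:ℝ)..1, ⟪g (θ + t • v), v⟫) ≤
      ⟪g θ, v⟫ + H / 2 * ‖v‖ ^ 2 := by
    have h2 : (∫ t in (0:ℝ)..1, (⟪g θ, v⟫ + H * t * ‖v‖ ^ 2)) =
        ⟪g θ, v⟫ + H / 2 * ‖v‖ ^ 2 := by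
      rw [intervalIntegral.integral_add (intervalIntegrable_const)]
      · simp only [intervalIntegral.integral_const]
        have : (∫ t in (0:ℝ)..1, H * t * ‖v‖ ^ 2) = H / 2 * ‖v‖ ^ 2 := by
          have : (fun t : ℝ => H * t * ‖v‖ ^ 2) = fun t : ℝ => (H * ‖v‖ ^ 2) * t := by
            funext t; ring
          rw [this, intervalIntegral.integral_const_mul, integral_id]
          ring
        rw [this]; simp
      · exact (Continuous.intervalIntegrable ((continuous_const.mul continuous_id).mul continuous_const) 0 1)
    rw [← h2]
    apply intervalIntegral.integral_mono_on zero_le_one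
      (hφ'cont.intervalIntegrable 0 1)
      (Continuous.intervalIntegrable (continuous_const.add ((continuous_const.mul continuous_id).mul continuous_const)) 0 1)
    exact hbound
  have key : L (θ + v) - L θ ≤ ⟪g θ, v⟫ + H / 2 * ‖v‖ ^ 2 := hFTC ▸ hint
  have hθ' : θ - α • d = θ + v := by simp [hv, sub_eq_add_neg]
  rw [hθ']
  have hv1 : ⟪g θ, v⟫ = -α * ⟪g θ, d⟫ := by
    simp [hv, inner_smul_right]
  have hv2 : ‖v‖ ^ 2 = α ^ 2 * ‖d‖ ^ 2 := by
    rw [hv, norm_neg, norm_smul, Real.norm_eq_abs, mul_pow, sq_abs]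
  have hHα : H * α ≤ 1 := by
    rw [mul_comm]; exact (le_div_iff₀ hH).mp hαH
  have step2 : H / 2 * ‖v‖ ^ 2 ≤ α / 2 * ‖d‖ ^ 2 := by
    rw [hv2]
    have : H / 2 * (α ^ 2 * ‖d‖ ^ 2) = (H * α) * (α / 2 * ‖d‖ ^ 2) := by ring
    rw [this]
    nlinarith [sq_nonneg ‖d‖, sq_nonneg α, mul_pos hα hα]
  have key2 : L (θ + v) - L θ ≤ -α * ⟪g θ, d⟫ + α / 2 * ‖d‖ ^ 2 := by
    rw [hv1] at key; linarith
  -- expand with e = d - g θ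
  set e : EuclideanSpace ℝ (Fin m) := d - g θ with he
  have hde : d = g θ + e := by simp [he]
  have hgd : ⟪g θ, d⟫ = ‖g θ‖ ^ 2 + ⟪g θ, e⟫ := by
    rw [hde, inner_add_right, real_inner_self_eq_norm_sq]
  have hdsq : ‖d‖ ^ 2 = ‖g θ‖ ^ 2 + 2 * ⟪g θ, e⟫ + ‖e‖ ^ 2 := by
    rw [hde, ← real_inner_self_eq_norm_sq, ← real_inner_self_eq_norm_sq,
      ← real_inner_self_eq_norm_sq, inner_add_add_self, real_inner_comm e (g θ)]
    ring
  have hesq : ‖e‖ ^ 2 ≤ c ^ 2 * ‖g θ‖ ^ 2 := by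
    nlinarith [norm_nonneg e, norm_nonneg (g θ)]
  calc L (θ + v) - L θ ≤ -α * ⟪g θ, d⟫ + α / 2 * ‖d‖ ^ 2 := key2
    _ = -(α / 2) * ‖g θ‖ ^ 2 + α / 2 * ‖e‖ ^ 2 := by
        rw [hgd, hdsq]; ring
    _ ≤ -(α / 2) * ‖g θ‖ ^ 2 + α / 2 * (c ^ 2 * ‖g θ‖ ^ 2) := by gcongr
    _ = -(α / 2) * (1 - c ^ 2) * ‖g θ‖ ^ 2 := by ring
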